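/- arXiv:2002.07012 — 3 statements merged into one kernel-verified Lean document; each statement's English description precedes it below -/
import Mathlib

section
/- Consider the walk-based LP relaxation on a graph G = (V, E) with |V| = n ≥ 1 and T + 1 ≤ n timesteps, with variables x_v^t ∈ [0,1] for v ∈ V, t ∈ {0,...,T}, constraints: (i) ∑_{v∈V} x_v^t ≤ 1 for all t; (ii) ∑_{t=0}^T x_v^t ≤ 1 for all v; (iii) ∑_v x_v^{t+1} ≤ ∑_v x_v^t for all t < T; (iv) x_v^t + ∑_{w: vw∉E, w≠v} x_w^{t+1} ≤ 1 for all v and t < T; (v) x_v^t + ∑_{τ=t+2}^T x_w^τ ≤ 1 for all edges vw and t ≤ T-2; and objective ∑_{t=1}^T ∑_v x_v^t. Then the assignment x_v^t = 1/n for all v, t is feasible and attains objective value T. -/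
/-- The uniform assignment `x_v^t = 1/n` is feasible for the walk-based LP relaxation
with `T + 1 ≤ n` timesteps and attains objective value `T`. -/
theorem stmt6 {V : Type*} [Fintype V] [DecidableEq V] (G : SimpleGraph V)
    [DecidableRel G.Adj] (hconn : G.Connected) (T : ℕ)
    (hT : T + 1 ≤ Fintype.card V)
    (x : V → ℕ → ℝ) (hx : x = fun _ _ => 1 / (Fintype.card V : ℝ)) :
    (∀ v t, 0 ≤ x v t ∧ x v t ≤ 1) ∧
    (∀ t, t ≤ T → ∑ v, x v t ≤ 1) ∧
    (∀ v, ∑ t ∈ Finset.range (T + 1), x v t ≤ 1) ∧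
    (∀ t, t < T → ∑ v, x v (t + 1) ≤ ∑ v, x v t) ∧
    (∀ v t, t < T →
      x v t + ∑ w ∈ Finset.univ.filter (fun w => ¬ G.Adj v w ∧ w ≠ v), x w (t + 1) ≤ 1) ∧
    (∀ v w, G.Adj v w → ∀ t, t + 2 ≤ T →
      x v t + ∑ τ ∈ Finset.Icc (t + 2) T, x w τ ≤ 1) ∧
    (∑ t ∈ Finset.Icc 1 T, ∑ v, x v t = T) := by
  subst hx
  set n := Fintype.card V with hn
  have hn1 : 1 ≤ n := le_trans (Nat.le_add_left 1 T) hT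
  have hnpos : (0 : ℝ) < n := by exact_mod_cast hn1
  have hinv0 : (0 : ℝ) ≤ 1 / n := by positivity
  have hinv1 : (1 : ℝ) / n ≤ 1 := by
    rw [div_le_one hnpos]; exact_mod_cast hn1
  have hsumv : ∀ t : ℕ, (∑ _v : V, (1 : ℝ) / n) = 1 := by
    intro t
    rw [Finset.sum_const, Finset.card_univ, ← hn, nsmul_eq_mul, mul_one_div,
      div_self (ne_of_gt hnpos)]
  refine ⟨fun v t => ⟨hinv0, hinv1⟩, fun t _ => (hsumv t).le, ?_, fun t _ => le_of_eq ((hsumv 0).trans (hsumv 0).symm), ?_, ?_, ?_⟩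
  · intro v
    rw [Finset.sum_const, Finset.card_range, nsmul_eq_mul, mul_one_div, div_le_one hnpos]
    exact_mod_cast hT
  · intro v t _
    rw [Finset.sum_const, nsmul_eq_mul, mul_one_div, ← add_div, div_le_one hnpos]
    have hcard : (Finset.univ.filter (fun w => ¬ G.Adj v w ∧ w ≠ v)).card ≤ n - 1 := by
      have : (Finset.univ.filter (fun w => ¬ G.Adj v w ∧ w ≠ v)) ⊆ Finset.univ.erase v := by
        intro w hw
        simp only [Finset.mem_filter] at hw
        exact Finset.mem_erase.mpr ⟨hw.2.2, Finset.mem_univ w⟩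
      calc _ ≤ (Finset.univ.erase v).card := Finset.card_le_card this
        _ = n - 1 := by rw [Finset.card_erase_of_mem (Finset.mem_univ v), Finset.card_univ]
    have : 1 + (Finset.univ.filter (fun w => ¬ G.Adj v w ∧ w ≠ v)).card ≤ n := by omega
    push_cast
    exact_mod_cast this
  · intro v w _ t ht
    rw [Finset.sum_const, nsmul_eq_mul, mul_one_div, ← add_div, div_le_one hnpos]
    rw [Nat.card_Icc]
    have : 1 + (T - (t + 1)) ≤ n := by omega
    push_cast
    exact_mod_cast this
  · rw [Finset.sum_congr rfl (fun t _ => hsumv t), Finset.sum_const, Nat.card_Icc,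
      nsmul_eq_mul, mul_one]
    push_cast
    ring
end

section
/- Let ℓ ≥ 3 and let G be the graph with vertices v_L, v_R, m_1, ..., m_ℓ, v' where each m_i is adjacent to v_L and v_R and v' is adjacent only to v_R. Form G* by adding a vertex s adjacent to all vertices of G. Suppose x : E(G*) → [0,1] satisfies: (a) ∑_{v ∈ V(G)} x_{sv} = 2; and (b) for every edge e ∈ E(G), 2 x_e ≤ ∑_{f ∈ E(G*), f adjacent to e} x_f ≤ 2. Then ∑_{e ∈ E(G)} x_e ≤ 4 − 1/ℓ. -/
/-- The apex augmentation `G*`: a new vertex `none` adjacent to every original vertex. -/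
def apexGraph {V : Type*} (G : SimpleGraph V) : SimpleGraph (Option V) :=
  SimpleGraph.fromRel (fun a b =>
    a = none ∨ ∃ u v : V, a = some u ∧ b = some v ∧ G.Adj u v)

/-- The graph with hubs `v_L = inr 0`, `v_R = inr 1`, pendant `v' = inr 2`, and
midpoints `m_i = inl i` (each adjacent to both hubs); `v'` is adjacent only to `v_R`. -/
def pGraph (ℓ : ℕ) : SimpleGraph (Fin ℓ ⊕ Fin 3) :=
  SimpleGraph.fromRel (fun a b =>
    (∃ i : Fin ℓ, a = Sum.inl i ∧ (b = Sum.inr 0 ∨ b = Sum.inr 1)) ∨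
    (a = Sum.inr 1 ∧ b = Sum.inr 2))

lemma pAdj {ℓ : ℕ} (a b : Fin ℓ ⊕ Fin 3) : (pGraph ℓ).Adj a b ↔
    (∃ i : Fin ℓ, (a = Sum.inl i ∧ (b = Sum.inr 0 ∨ b = Sum.inr 1)) ∨
       (b = Sum.inl i ∧ (a = Sum.inr 0 ∨ a = Sum.inr 1))) ∨
    (a = Sum.inr 1 ∧ b = Sum.inr 2) ∨ (b = Sum.inr 1 ∧ a = Sum.inr 2) := by
  simp only [pGraph, SimpleGraph.fromRel_adj]
  constructor
  · rintro ⟨h, (⟨i, rfl, (rfl|rfl)⟩|⟨rfl,rfl⟩) | (⟨i, rfl, (rfl|rfl)⟩|⟨rfl,rfl⟩)⟩ <;>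
      simp <;> exact ⟨i, by simp⟩
  · rintro (⟨i, ⟨rfl, (rfl|rfl)⟩|⟨rfl, (rfl|rfl)⟩⟩ | ⟨rfl,rfl⟩ | ⟨rfl,rfl⟩) <;>
      refine ⟨by simp, ?_⟩ <;> [skip; skip; skip; skip; skip; skip] <;>
      first
        | exact Or.inl (Or.inl ⟨i, rfl, by simp⟩)
        | exact Or.inr (Or.inl ⟨i, rfl, by simp⟩)
        | exact Or.inl (Or.inr ⟨rfl, rfl⟩)
        | exact Or.inr (Or.inr ⟨rfl, rfl⟩)

lemma apexAdj {V : Type*} (G : SimpleGraph V) (a b : Option V) : (apexGraph G).Adj a b ↔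
    a ≠ b ∧ (a = none ∨ b = none ∨ ∃ u v : V, a = some u ∧ b = some v ∧ G.Adj u v) := by
  simp only [apexGraph, SimpleGraph.fromRel_adj]
  constructor
  · rintro ⟨h, h2 | h2⟩
    · rcases h2 with h2 | ⟨u, v, rfl, rfl, huv⟩
      · tauto
      · exact ⟨h, Or.inr (Or.inr ⟨u, v, rfl, rfl, huv⟩)⟩
    · rcases h2 with h2 | ⟨u, v, rfl, rfl, huv⟩
      · tauto
      · exact ⟨h, Or.inr (Or.inr ⟨v, u, rfl, rfl, huv.symm⟩)⟩
  · rintro ⟨h, h2 | h2 | h2⟩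
    · exact ⟨h, Or.inl (Or.inl h2)⟩
    · exact ⟨h, Or.inr (Or.inl h2)⟩
    · exact ⟨h, Or.inl (Or.inr h2)⟩

open Finset Sum
open scoped Classical

lemma pEdgeFinset (ℓ : ℕ) : (pGraph ℓ).edgeFinset =
    (univ.image fun i : Fin ℓ => s(inl i, inr 0)) ∪
    (univ.image fun i : Fin ℓ => s(inl i, inr 1)) ∪ {s(inr 1, inr 2)} := by
  ext e
  induction e using Sym2.ind with
  | _ a b =>
    simp only [SimpleGraph.mem_edgeFinset, SimpleGraph.mem_edgeSet, pAdj, Finset.mem_union,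
      Finset.mem_image, Finset.mem_singleton, Finset.mem_univ, true_and, Sym2.eq_iff]
    constructor
    · rintro (⟨i, ⟨rfl, (rfl|rfl)⟩|⟨rfl, (rfl|rfl)⟩⟩ | ⟨rfl,rfl⟩ | ⟨rfl,rfl⟩) <;> simp
    · rintro ((⟨i, (⟨rfl,rfl⟩|⟨rfl,rfl⟩)⟩|⟨i,(⟨rfl,rfl⟩|⟨rfl,rfl⟩)⟩) | (⟨rfl,rfl⟩|⟨rfl,rfl⟩)) <;>
        first
          | exact Or.inl ⟨i, Or.inl ⟨rfl, by simp⟩⟩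
          | exact Or.inl ⟨i, Or.inr ⟨rfl, by simp⟩⟩
          | exact Or.inr (Or.inl ⟨rfl, rfl⟩)
          | exact Or.inr (Or.inr ⟨rfl, rfl⟩)

lemma sum_pEdge {ℓ : ℕ} (f : Sym2 (Fin ℓ ⊕ Fin 3) → ℝ) :
    ∑ e ∈ (pGraph ℓ).edgeFinset, f e =
      (∑ i : Fin ℓ, f s(inl i, inr 0)) + (∑ i : Fin ℓ, f s(inl i, inr 1)) + f s(inr 1, inr 2) := by
  rw [pEdgeFinset, sum_union, sum_union,
    sum_image (by intro a _ b _ h; simpa [Sym2.eq_iff] using h),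
    sum_image (by intro a _ b _ h; simpa [Sym2.eq_iff] using h), sum_singleton]
  · rw [disjoint_left]
    rintro e he
    simp only [mem_image, mem_univ, true_and] at he
    obtain ⟨i, rfl⟩ := he
    simp [Sym2.eq_iff]
  · rw [disjoint_left]
    rintro e he
    simp only [mem_union, mem_image, mem_univ, true_and] at he
    rcases he with ⟨i, rfl⟩ | ⟨i, rfl⟩ <;> simp [Sym2.eq_iff]

-- edge membership helpers
lemma apex_mem_sv {ℓ : ℕ} (v : Fin ℓ ⊕ Fin 3) :
    s(none, some v) ∈ (apexGraph (pGraph ℓ)).edgeFinset := by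
  rw [SimpleGraph.mem_edgeFinset, SimpleGraph.mem_edgeSet, apexAdj]
  simp

lemma apex_mem_uv {ℓ : ℕ} {u v : Fin ℓ ⊕ Fin 3} (h : (pGraph ℓ).Adj u v) :
    s(some u, some v) ∈ (apexGraph (pGraph ℓ)).edgeFinset := by
  rw [SimpleGraph.mem_edgeFinset, SimpleGraph.mem_edgeSet, apexAdj]
  exact ⟨by simpa using h.ne, Or.inr (Or.inr ⟨u, v, rfl, rfl, h⟩)⟩

lemma adj_l0 {ℓ : ℕ} (i : Fin ℓ) : (pGraph ℓ).Adj (inl i) (inr 0) := by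
  rw [pAdj]; exact Or.inl ⟨i, Or.inl ⟨rfl, Or.inl rfl⟩⟩

lemma adj_l1 {ℓ : ℕ} (i : Fin ℓ) : (pGraph ℓ).Adj (inl i) (inr 1) := by
  rw [pAdj]; exact Or.inl ⟨i, Or.inl ⟨rfl, Or.inr rfl⟩⟩

lemma adj_12 {ℓ : ℕ} : (pGraph ℓ).Adj (inr 1 : Fin ℓ ⊕ Fin 3) (inr 2) := by
  rw [pAdj]; exact Or.inr (Or.inl ⟨rfl, rfl⟩)


open scoped Classical in
/-- Any `[0,1]`-valued edge assignment on the apex augmentation of `pGraph ℓ` satisfying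
the base-model constraints has objective value at most `4 - 1/ℓ`. -/
theorem stmt8 (ℓ : ℕ) (hl : 3 ≤ ℓ)
    (x : Sym2 (Option (Fin ℓ ⊕ Fin 3)) → ℝ)
    (hx01 : ∀ e ∈ (apexGraph (pGraph ℓ)).edgeSet, 0 ≤ x e ∧ x e ≤ 1)
    (ha : ∑ v : Fin ℓ ⊕ Fin 3, x s(none, some v) = 2)
    (hb : ∀ e ∈ (pGraph ℓ).edgeFinset,
      2 * x (Sym2.map some e) ≤
        (∑ f ∈ (apexGraph (pGraph ℓ)).edgeFinset.filter
          (fun f => f ≠ Sym2.map some e ∧ ∃ z, z ∈ f ∧ z ∈ Sym2.map some e), x f) ∧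
      (∑ f ∈ (apexGraph (pGraph ℓ)).edgeFinset.filter
          (fun f => f ≠ Sym2.map some e ∧ ∃ z, z ∈ f ∧ z ∈ Sym2.map some e), x f) ≤ 2) :
    ∑ e ∈ (pGraph ℓ).edgeFinset, x (Sym2.map some e) ≤ 4 - 1 / (ℓ : ℝ) := by
  -- abbreviations
  set A := ∑ i : Fin ℓ, x s(some (inl i), some (inr 0)) with hA
  set B := ∑ i : Fin ℓ, x s(some (inl i), some (inr 1)) with hB
  set T := ∑ i : Fin ℓ, x s(none, some (inl i)) with hT
  set c := x s(some (inr 1 : Fin ℓ ⊕ Fin 3), some (inr 2)) with hc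
  set p := x s((none : Option (Fin ℓ ⊕ Fin 3)), some (inr 0)) with hp
  set q := x s((none : Option (Fin ℓ ⊕ Fin 3)), some (inr 1)) with hq
  set r := x s((none : Option (Fin ℓ ⊕ Fin 3)), some (inr 2)) with hr
  have hgoal : ∑ e ∈ (pGraph ℓ).edgeFinset, x (Sym2.map some e) = A + B + c := by
    rw [sum_pEdge (fun e => x (Sym2.map some e))]
    simp only [Sym2.map_pair_eq]
    rfl
  rw [hgoal]
  -- split ha
  have haT : T + (p + q + r) = 2 := by
    rw [Fintype.sum_sum_type] at ha
    rw [Fin.sum_univ_three] at ha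
    rw [hT, hp, hq, hr]
    linarith [ha]
  -- upper bounds for a-edges
  have hUa : ∀ i : Fin ℓ, (A - x s(some (inl i), some (inr 0)))
      + x s(some (inl i), some (inr 1)) + x s(none, some (inl i)) + p ≤ 2 := by
    intro i
    have hmem : s(inl i, inr 0) ∈ (pGraph ℓ).edgeFinset :=
      SimpleGraph.mem_edgeFinset.2 (adj_l0 i)
    have hub := (hb _ hmem).2
    rw [Sym2.map_pair_eq] at hub
    set N : Finset (Sym2 (Option (Fin ℓ ⊕ Fin 3))) :=
      ((univ.erase i).image fun j : Fin ℓ => s(some (inl j), some (inr 0))) ∪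
      {s(some (inl i), some (inr 1)), s(none, some (inl i)), s(none, some (inr 0))} with hN
    have hsub : N ⊆ (apexGraph (pGraph ℓ)).edgeFinset.filter
        (fun f => f ≠ s(some (inl i), some (inr 0)) ∧
          ∃ z, z ∈ f ∧ z ∈ s(some (inl i), some (inr 0))) := by
      intro f hf
      rw [hN] at hf
      simp only [mem_union, mem_image, mem_erase, mem_univ, and_true, mem_insert,
        mem_singleton] at hf
      rw [mem_filter]
      rcases hf with ⟨j, hj, rfl⟩ | rfl | rfl | rfl
      · exact ⟨apex_mem_uv (adj_l0 j), by simp [Sym2.eq_iff, hj],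
          ⟨some (inr 0), by simp⟩⟩
      · exact ⟨apex_mem_uv (adj_l1 i), by simp [Sym2.eq_iff],
          ⟨some (inl i), by simp⟩⟩
      · exact ⟨apex_mem_sv _, by simp [Sym2.eq_iff], ⟨some (inl i), by simp⟩⟩
      · exact ⟨apex_mem_sv _, by simp [Sym2.eq_iff], ⟨some (inr 0), by simp⟩⟩
    have hNle : ∑ f ∈ N, x f ≤ 2 := by
      refine le_trans (sum_le_sum_of_subset_of_nonneg hsub ?_) hub
      intro f hfil _
      exact (hx01 f (SimpleGraph.mem_edgeFinset.1 (mem_filter.1 hfil).1)).1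
    have hNsum : ∑ f ∈ N, x f = (A - x s(some (inl i), some (inr 0)))
        + (x s(some (inl i), some (inr 1)) + (x s(none, some (inl i)) + p)) := by
      rw [hN, sum_union, sum_image]
      · rw [sum_insert, sum_insert, sum_singleton]
        · rw [Finset.sum_erase_eq_sub (mem_univ i), hA, hp]
        · simp [Sym2.eq_iff]
        · simp [Sym2.eq_iff]
      · intro a _ b _ h
        simpa [Sym2.eq_iff] using h
      · rw [disjoint_left]
        rintro e he
        simp only [mem_image, mem_erase, mem_univ, and_true] at he
        obtain ⟨j, hj, rfl⟩ := he
        simp [Sym2.eq_iff]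
    linarith [hNsum ▸ hNle]
  -- upper bounds for b-edges
  have hUb : ∀ i : Fin ℓ, (B - x s(some (inl i), some (inr 1)))
      + x s(some (inl i), some (inr 0)) + x s(none, some (inl i)) + q + c ≤ 2 := by
    intro i
    have hmem : s(inl i, inr 1) ∈ (pGraph ℓ).edgeFinset :=
      SimpleGraph.mem_edgeFinset.2 (adj_l1 i)
    have hub := (hb _ hmem).2
    rw [Sym2.map_pair_eq] at hub
    set N : Finset (Sym2 (Option (Fin ℓ ⊕ Fin 3))) :=
      ((univ.erase i).image fun j : Fin ℓ => s(some (inl j), some (inr 1))) ∪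
      {s(some (inl i), some (inr 0)), s(none, some (inl i)), s(none, some (inr 1)),
        s(some (inr 1), some (inr 2))} with hN
    have hsub : N ⊆ (apexGraph (pGraph ℓ)).edgeFinset.filter
        (fun f => f ≠ s(some (inl i), some (inr 1)) ∧
          ∃ z, z ∈ f ∧ z ∈ s(some (inl i), some (inr 1))) := by
      intro f hf
      rw [hN] at hf
      simp only [mem_union, mem_image, mem_erase, mem_univ, and_true, mem_insert,
        mem_singleton] at hf
      rw [mem_filter]
      rcases hf with ⟨j, hj, rfl⟩ | rfl | rfl | rfl | rfl
      · exact ⟨apex_mem_uv (adj_l1 j), by simp [Sym2.eq_iff, hj],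
          ⟨some (inr 1), by simp⟩⟩
      · exact ⟨apex_mem_uv (adj_l0 i), by simp [Sym2.eq_iff],
          ⟨some (inl i), by simp⟩⟩
      · exact ⟨apex_mem_sv _, by simp [Sym2.eq_iff], ⟨some (inl i), by simp⟩⟩
      · exact ⟨apex_mem_sv _, by simp [Sym2.eq_iff], ⟨some (inr 1), by simp⟩⟩
      · exact ⟨apex_mem_uv adj_12, by simp [Sym2.eq_iff], ⟨some (inr 1), by simp⟩⟩
    have hNle : ∑ f ∈ N, x f ≤ 2 := by
      refine le_trans (sum_le_sum_of_subset_of_nonneg hsub ?_) hub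
      intro f hfil _
      exact (hx01 f (SimpleGraph.mem_edgeFinset.1 (mem_filter.1 hfil).1)).1
    have hNsum : ∑ f ∈ N, x f = (B - x s(some (inl i), some (inr 1)))
        + (x s(some (inl i), some (inr 0)) + (x s(none, some (inl i)) + (q + c))) := by
      rw [hN, sum_union, sum_image]
      · rw [sum_insert, sum_insert, sum_insert, sum_singleton]
        · rw [Finset.sum_erase_eq_sub (mem_univ i), hB, hq, hc]
        · simp [Sym2.eq_iff]
        · simp [Sym2.eq_iff]
        · simp [Sym2.eq_iff]
      · intro a _ b _ h
        simpa [Sym2.eq_iff] using h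
      · rw [disjoint_left]
        rintro e he
        simp only [mem_image, mem_erase, mem_univ, and_true] at he
        obtain ⟨j, hj, rfl⟩ := he
        simp [Sym2.eq_iff]
    linarith [hNsum ▸ hNle]
  -- sum the per-index bounds
  have SA : (ℓ : ℝ) * A - A + B + T + (ℓ : ℝ) * p ≤ 2 * ℓ := by
    have h := Finset.sum_le_sum (s := (univ : Finset (Fin ℓ))) (fun i _ => hUa i)
    simp only [Finset.sum_add_distrib, Finset.sum_sub_distrib, Finset.sum_const, card_univ,
      Fintype.card_fin, nsmul_eq_mul, ← hA, ← hB, ← hT] at h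
    linarith [h]
  have SB : (ℓ : ℝ) * B - B + A + T + (ℓ : ℝ) * q + (ℓ : ℝ) * c ≤ 2 * ℓ := by
    have h := Finset.sum_le_sum (s := (univ : Finset (Fin ℓ))) (fun i _ => hUb i)
    simp only [Finset.sum_add_distrib, Finset.sum_sub_distrib, Finset.sum_const, card_univ,
      Fintype.card_fin, nsmul_eq_mul, ← hA, ← hB, ← hT] at h
    linarith [h]
  -- bounds on single variables
  have hL : (3 : ℝ) ≤ (ℓ : ℝ) := by exact_mod_cast hl
  have hLpos : (0 : ℝ) < (ℓ : ℝ) := by linarith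
  have hp0 : 0 ≤ p := (hx01 _ (SimpleGraph.mem_edgeFinset.1 (apex_mem_sv (inr 0)))).1
  have hq0 : 0 ≤ q := (hx01 _ (SimpleGraph.mem_edgeFinset.1 (apex_mem_sv (inr 1)))).1
  have hr1 : r ≤ 1 := (hx01 _ (SimpleGraph.mem_edgeFinset.1 (apex_mem_sv (inr 2)))).2
  have main : (ℓ : ℝ) * (A + B + c) ≤ 4 * (ℓ : ℝ) - 1 := by
    nlinarith [SA, SB, haT, hp0, hq0, hr1,
      mul_nonneg (by linarith : (0:ℝ) ≤ (ℓ:ℝ) - 2) (by linarith : (0:ℝ) ≤ p + q)]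
  rw [show (4 : ℝ) - 1 / (ℓ : ℝ) = (4 * (ℓ:ℝ) - 1) / (ℓ:ℝ) by field_simp]
  rw [le_div_iff₀ hLpos]
  linarith [main]
end

section
/- Let G be a graph, let S ⊆ E(G) be a set of edges such that every vertex incident to an edge of S has exactly two incident edges in S, and suppose additionally that for every edge e ∈ E(G) (selected or not), at most two edges of S are adjacent to e. If s is a vertex incident to exactly two edges of S and the edges of S form a single connected subgraph, then S is the edge set of an induced cycle of G except possibly for chords incident to s. -/
open SimpleGraph

section helpers
variable {V : Type*} {G : SimpleGraph V}

lemma mem_support_of_mem_edges' {u v w : V} (p : G.Walk v w) {e : Sym2 V}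
    (he : e ∈ p.edges) (hu : u ∈ e) : u ∈ p.support := by
  induction e with
  | h a b =>
    rcases Sym2.mem_iff.mp hu with rfl | rfl
    · exact p.fst_mem_support_of_mem_edges he
    · exact p.snd_mem_support_of_mem_edges he

lemma start_edge_eq {u w : V} (q : G.Walk u w) (hq : q.IsPath) {e f : Sym2 V}
    (he : e ∈ q.edges) (hue : u ∈ e) (hf : f ∈ q.edges) (huf : u ∈ f) : e = f := by
  cases q with
  | nil => simp at he
  | cons h r =>
    rw [SimpleGraph.Walk.cons_isPath_iff] at hq
    simp only [SimpleGraph.Walk.edges_cons, List.mem_cons] at he hf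
    rcases he with rfl | he
    · rcases hf with rfl | hf
      · rfl
      · exact absurd (mem_support_of_mem_edges' r hf huf) hq.2
    · exact absurd (mem_support_of_mem_edges' r he hue) hq.2

lemma cycle_two_edges_start {u : V} (c : G.Walk u u) (hc : c.IsCycle) :
    ∃ e f, e ∈ c.edges ∧ f ∈ c.edges ∧ e ≠ f ∧ u ∈ e ∧ u ∈ f := by
  obtain ⟨b, h, r, rfl⟩ := SimpleGraph.Walk.not_nil_iff.mp hc.not_nil
  have h3 := hc.three_le_length
  rw [SimpleGraph.Walk.cons_isCycle_iff] at hc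
  have hrnil : ¬ r.reverse.Nil := by
    rw [SimpleGraph.Walk.nil_iff_length_eq, SimpleGraph.Walk.length_reverse]
    simp only [SimpleGraph.Walk.length_cons] at h3
    omega
  obtain ⟨x, hx, q, hq⟩ := SimpleGraph.Walk.not_nil_iff.mp hrnil
  have he2 : s(u, x) ∈ r.edges := by
    have : s(u, x) ∈ r.reverse.edges := by rw [hq]; exact List.mem_cons_self
    rwa [SimpleGraph.Walk.edges_reverse, List.mem_reverse] at this
  refine ⟨s(u, b), s(u, x), List.mem_cons_self, List.mem_cons_of_mem _ he2, ?_,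
    Sym2.mem_mk_left _ _, Sym2.mem_mk_left _ _⟩
  intro hcon
  exact hc.2 (hcon ▸ he2)

lemma cycle_two_edges {x : V} {c : G.Walk x x} (hc : c.IsCycle) {u : V}
    (hu : u ∈ c.support) :
    ∃ e f, e ∈ c.edges ∧ f ∈ c.edges ∧ e ≠ f ∧ u ∈ e ∧ u ∈ f := by
  classical
  obtain ⟨e, f, he, hf, hef, hue, huf⟩ := cycle_two_edges_start (c.rotate u hu) (hc.rotate hu)
  exact ⟨e, f, (c.rotate_edges u hu).mem_iff.mp he, (c.rotate_edges u hu).mem_iff.mp hf,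
    hef, hue, huf⟩

lemma path_internal_two_edges [DecidableEq V] {u w x : V} (p : G.Walk u w) (hp : p.IsPath)
    (hx : x ∈ p.support) (hxu : x ≠ u) (hxw : x ≠ w) :
    ∃ e f, e ∈ p.edges ∧ f ∈ p.edges ∧ e ≠ f ∧ x ∈ e ∧ x ∈ f := by
  have hsplit := p.take_spec hx
  have h1 : ¬ (p.takeUntil x hx).reverse.Nil := by
    rw [SimpleGraph.Walk.nil_iff_length_eq, SimpleGraph.Walk.length_reverse,
      ← SimpleGraph.Walk.nil_iff_length_eq]
    intro hn
    exact hxu (SimpleGraph.Walk.Nil.eq hn).symm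
  have h2 : ¬ (p.dropUntil x hx).Nil := by
    intro hn
    exact hxw (SimpleGraph.Walk.Nil.eq hn)
  obtain ⟨y, hy, q1, hq1⟩ := SimpleGraph.Walk.not_nil_iff.mp h1
  obtain ⟨z, hz, q2, hq2⟩ := SimpleGraph.Walk.not_nil_iff.mp h2
  have he1 : s(x, y) ∈ (p.takeUntil x hx).edges := by
    have : s(x, y) ∈ (p.takeUntil x hx).reverse.edges := by
      rw [hq1]; exact List.mem_cons_self
    rwa [SimpleGraph.Walk.edges_reverse, List.mem_reverse] at this
  have he2 : s(x, z) ∈ (p.dropUntil x hx).edges := by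
    rw [hq2]; exact List.mem_cons_self
  have hedges : p.edges = (p.takeUntil x hx).edges ++ (p.dropUntil x hx).edges := by
    conv_lhs => rw [← hsplit]
    exact SimpleGraph.Walk.edges_append _ _
  have hnd : p.edges.Nodup := hp.isTrail.edges_nodup
  rw [hedges] at hnd
  refine ⟨s(x, y), s(x, z), ?_, ?_, ?_, Sym2.mem_mk_left _ _, Sym2.mem_mk_left _ _⟩
  · rw [hedges]; exact List.mem_append_left _ he1
  · rw [hedges]; exact List.mem_append_right _ he2
  · intro hcon
    exact (List.disjoint_of_nodup_append hnd) he1 (hcon ▸ he2)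

end helpers

/-- The subgraph of `G` with edge set `S` and vertices those incident to an edge of `S`. -/
def edgeSub {V : Type*} (G : SimpleGraph V) (S : Set (Sym2 V)) (hS : S ⊆ G.edgeSet) :
    G.Subgraph where
  verts := {v | ∃ e ∈ S, v ∈ e}
  Adj a b := s(a, b) ∈ S
  adj_sub h := (G.mem_edgeSet).mp (hS h)
  edge_vert h := ⟨_, h, Sym2.mem_mk_left _ _⟩
  symm := ⟨fun a b h => by simpa only [Sym2.eq_swap] using h⟩

/-- If every vertex touched by `S` has exactly two incident edges in `S`, every edge of
`G` is adjacent to at most two edges of `S`, the vertex `s` is incident to exactly two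
edges of `S`, and `S` forms a single connected subgraph, then `S` is the edge set of a
cycle all of whose chords are incident to `s`. -/
theorem stmt15 {V : Type*} [Fintype V] (G : SimpleGraph V)
    (S : Set (Sym2 V)) (hS : S ⊆ G.edgeSet)
    (hdeg : ∀ v : V, (∃ e ∈ S, v ∈ e) → {e ∈ S | v ∈ e}.ncard = 2)
    (hadj : ∀ e ∈ G.edgeSet, {f ∈ S | f ≠ e ∧ ∃ x, x ∈ f ∧ x ∈ e}.ncard ≤ 2)
    (s : V) (hs : {e ∈ S | s ∈ e}.ncard = 2)
    (hconn : (edgeSub G S hS).Connected) :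
    ∃ c : G.Walk s s, c.IsCycle ∧ (∀ e, e ∈ c.edges ↔ e ∈ S) ∧
      ∀ a b : V, G.Adj a b → a ∈ c.support → b ∈ c.support →
        ¬ c.toSubgraph.Adj a b → (a = s ∨ b = s) := by
  classical
  have hsne : {e ∈ S | s ∈ e}.Nonempty := Set.nonempty_of_ncard_ne_zero (by omega)
  obtain ⟨e0, he0S, hse0⟩ := hsne
  obtain ⟨a0, rfl⟩ := Sym2.mem_iff_exists.mp hse0
  have hadj0 : G.Adj s a0 := (G.mem_edgeSet).mp (hS he0S)
  set P : (Σ v : V, G.Walk s v) → Prop := fun q =>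
    q.2.IsPath ∧ 0 < q.2.length ∧ ∀ e ∈ q.2.edges, e ∈ S with hPdef
  have hP0 : P ⟨a0, Walk.cons hadj0 Walk.nil⟩ := by
    refine ⟨?_, by simp, ?_⟩
    · rw [Walk.cons_isPath_iff]
      exact ⟨Walk.IsPath.nil, by simp [hadj0.ne]⟩
    · intro e he
      simp only [Walk.edges_cons, Walk.edges_nil, List.mem_singleton] at he
      subst he; exact he0S
  set L : Set ℕ := {n | ∃ q, P q ∧ q.2.length = n} with hLdef
  have hLne : L.Nonempty := ⟨_, _, hP0, rfl⟩
  have hLbdd : BddAbove L := ⟨Fintype.card V, by rintro n ⟨q, hq, rfl⟩; exact hq.1.length_lt.le⟩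
  obtain ⟨⟨v, p⟩, hPp, hlenp⟩ := Nat.sSup_mem hLne hLbdd
  obtain ⟨hp, hppos, hpS⟩ := hPp
  dsimp only at hp hppos hpS hlenp
  have hmax : ∀ q, P q → q.2.length ≤ p.length := by
    intro q hq
    have hmem : q.2.length ∈ L := ⟨q, hq, rfl⟩
    exact hlenp ▸ le_csSup hLbdd hmem
  -- the last edge of p
  have hrevnil : ¬ p.reverse.Nil := by
    rw [Walk.nil_iff_length_eq, Walk.length_reverse]; omega
  obtain ⟨w, hvw, q, hqeq⟩ := Walk.not_nil_iff.mp hrevnil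
  have hlastrev : s(v, w) ∈ p.reverse.edges := by rw [hqeq]; exact List.mem_cons_self
  have hlast : s(v, w) ∈ p.edges := by
    rwa [Walk.edges_reverse, List.mem_reverse] at hlastrev
  have hlastS : s(v, w) ∈ S := hpS _ hlast
  have hdegv := hdeg v ⟨_, hlastS, Sym2.mem_mk_left _ _⟩
  obtain ⟨e', he', he'ne⟩ :=
    Set.exists_ne_of_one_lt_ncard (by rw [hdegv]; omega) s(v, w)
  obtain ⟨he'S, hve'⟩ := he'
  obtain ⟨x, rfl⟩ := Sym2.mem_iff_exists.mp hve'
  have hvx : G.Adj v x := (G.mem_edgeSet).mp (hS he'S)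
  have he'notp : s(v, x) ∉ p.edges := by
    intro hmem
    have hmem' : s(v, x) ∈ p.reverse.edges := by rwa [Walk.edges_reverse, List.mem_reverse]
    exact he'ne (start_edge_eq p.reverse hp.reverse hmem' (Sym2.mem_mk_left _ _)
      hlastrev (Sym2.mem_mk_left _ _))
  have hxsupp : x ∈ p.support := by
    by_contra hx
    have hp' : (Walk.cons hvx.symm p.reverse).IsPath := by
      rw [Walk.cons_isPath_iff]
      exact ⟨hp.reverse, by rwa [Walk.support_reverse, List.mem_reverse]⟩
    have hq' : P ⟨x, (Walk.cons hvx.symm p.reverse).reverse⟩ := by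
      refine ⟨hp'.reverse, by simp, ?_⟩
      intro e he
      rw [Walk.edges_reverse, List.mem_reverse, Walk.edges_cons, List.mem_cons] at he
      rcases he with rfl | he
      · rwa [Sym2.eq_swap]
      · exact hpS _ (by rwa [Walk.edges_reverse, List.mem_reverse] at he)
    have := hmax _ hq'
    dsimp only at this
    simp only [Walk.length_reverse, Walk.length_cons] at this
    omega
  have hxs : x = s := by
    by_contra hxs
    obtain ⟨f1, f2, hf1, hf2, hf12, hxf1, hxf2⟩ :=
      path_internal_two_edges p hp hxsupp hxs hvx.ne'
    have h3 : 2 < {e ∈ S | x ∈ e}.ncard := by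
      rw [Set.two_lt_ncard (Set.toFinite _)]
      exact ⟨f1, ⟨hpS _ hf1, hxf1⟩, f2, ⟨hpS _ hf2, hxf2⟩, s(v, x),
        ⟨he'S, Sym2.mem_mk_right _ _⟩, hf12,
        fun h => he'notp (h ▸ hf1), fun h => he'notp (h ▸ hf2)⟩
    have := hdeg x ⟨f1, hpS _ hf1, hxf1⟩
    omega
  rw [hxs] at he'S he'notp hvx
  have hsv : G.Adj s v := hvx.symm
  have hcyc : (Walk.cons hsv p.reverse).IsCycle := by
    rw [Walk.cons_isCycle_iff]
    refine ⟨hp.reverse, ?_⟩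
    rw [Walk.edges_reverse, List.mem_reverse, Sym2.eq_swap]
    exact he'notp
  have hcS : ∀ e ∈ (Walk.cons hsv p.reverse).edges, e ∈ S := by
    intro e he
    rw [Walk.edges_cons, List.mem_cons] at he
    rcases he with rfl | he
    · rwa [Sym2.eq_swap]
    · exact hpS _ (by rwa [Walk.edges_reverse, List.mem_reverse] at he)
  have hclosure : ∀ u, u ∈ (Walk.cons hsv p.reverse).support → ∀ f ∈ S, u ∈ f →
      f ∈ (Walk.cons hsv p.reverse).edges := by
    intro u hu f hfS huf
    obtain ⟨g1, g2, hg1, hg2, hg12, hug1, hug2⟩ := cycle_two_edges hcyc hu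
    have hdu := hdeg u ⟨f, hfS, huf⟩
    obtain ⟨α, β, hab, hset⟩ := Set.ncard_eq_two.mp hdu
    have hf' : f ∈ ({α, β} : Set (Sym2 V)) := by
      rw [← hset]; exact ⟨hfS, huf⟩
    have hg1' : g1 ∈ ({α, β} : Set (Sym2 V)) := by
      rw [← hset]; exact ⟨hcS _ hg1, hug1⟩
    have hg2' : g2 ∈ ({α, β} : Set (Sym2 V)) := by
      rw [← hset]; exact ⟨hcS _ hg2, hug2⟩
    simp only [Set.mem_insert_iff, Set.mem_singleton_iff] at hf' hg1' hg2'
    rcases hf' with rfl | rfl <;> rcases hg1' with h1 | h1 <;> rcases hg2' with h2 | h2 <;>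
      first
        | exact h1 ▸ hg1
        | exact h2 ▸ hg2
        | exact absurd (h1.trans h2.symm) hg12
  have hsupp' : ∀ u, u ∈ (edgeSub G S hS).verts → u ∈ (Walk.cons hsv p.reverse).support := by
    have key : ∀ (y z : (edgeSub G S hS).verts) (wk : (edgeSub G S hS).coe.Walk y z),
        (y : V) ∈ (Walk.cons hsv p.reverse).support →
        (z : V) ∈ (Walk.cons hsv p.reverse).support := by
      intro y z wk
      induction wk with
      | nil => exact id
      | @cons y1 y2 y3 h q ih =>
        intro hy
        have hSedge : s((y1 : V), (y2 : V)) ∈ S := by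
          have h' : (edgeSub G S hS).Adj y1 y2 := h
          exact h'
        have hmem := hclosure _ hy _ hSedge (Sym2.mem_mk_left _ _)
        exact ih (Walk.snd_mem_support_of_mem_edges _ hmem)
    intro u hu
    have hsverts : s ∈ (edgeSub G S hS).verts := show ∃ e ∈ S, s ∈ e from ⟨s(s, a0), he0S, Sym2.mem_mk_left _ _⟩
    obtain ⟨wk⟩ := hconn ⟨s, hsverts⟩ ⟨u, hu⟩
    exact key _ _ wk (Walk.start_mem_support _)
  refine ⟨Walk.cons hsv p.reverse, hcyc, ?_, ?_⟩
  · intro e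
    refine ⟨hcS e, ?_⟩
    induction e with
    | h α β =>
      intro heS
      have hα : α ∈ (edgeSub G S hS).verts := show ∃ e ∈ S, α ∈ e from ⟨_, heS, Sym2.mem_mk_left _ _⟩
      exact hclosure α (hsupp' α hα) _ heS (Sym2.mem_mk_left _ _)
  · intro a b hab hasup hbsup hnadj
    exfalso
    have habS : s(a, b) ∉ S := by
      intro h
      exact hnadj (Subgraph.mem_edgeSet.mp
        (((Walk.cons hsv p.reverse).mem_edges_toSubgraph).mpr
          (hclosure a hasup _ h (Sym2.mem_mk_left _ _))))
    obtain ⟨g1, g2, hg1, hg2, hg12, hag1, hag2⟩ := cycle_two_edges hcyc hasup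
    obtain ⟨g3, g4, hg3, hg4, hg34, hbg3, hbg4⟩ := cycle_two_edges hcyc hbsup
    have h13 : g1 ≠ g3 := by
      intro h
      have : g1 = s(a, b) := (Sym2.mem_and_mem_iff hab.ne).mp ⟨hag1, h ▸ hbg3⟩
      exact habS (this ▸ hcS _ hg1)
    have h23 : g2 ≠ g3 := by
      intro h
      have : g2 = s(a, b) := (Sym2.mem_and_mem_iff hab.ne).mp ⟨hag2, h ▸ hbg3⟩
      exact habS (this ▸ hcS _ hg2)
    have h3 : 2 < {f ∈ S | f ≠ s(a, b) ∧ ∃ x, x ∈ f ∧ x ∈ s(a, b)}.ncard := by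
      rw [Set.two_lt_ncard (Set.toFinite _)]
      refine ⟨g1, ⟨hcS _ hg1, fun h => habS (h ▸ hcS _ hg1), a, hag1, Sym2.mem_mk_left _ _⟩,
        g2, ⟨hcS _ hg2, fun h => habS (h ▸ hcS _ hg2), a, hag2, Sym2.mem_mk_left _ _⟩,
        g3, ⟨hcS _ hg3, fun h => habS (h ▸ hcS _ hg3), b, hbg3, Sym2.mem_mk_right _ _⟩,
        hg12, h13, h23⟩
    have := hadj s(a, b) ((G.mem_edgeSet).mpr hab)
    omega
end
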